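/- Let v : ℝ²∖{0} → ℂ satisfy Kv = v and Σ₂^c v = v (pointwise), and set w = v + e^{iπ/4} R_{π/2} v. Then: (i) Kw = w; (ii) Σ₄^c w = w, where Σ₄^c = e^{iπ/4} R_{π/2} Σ₂^c, i.e. (Σ₄^c u)(x,y) = e^{iπ/4} conj(u(y,x)); and (iii) w vanishes on the half-diagonal of angle −3π/4: w(−t,−t) = 0 for every t > 0. -/

import Mathlib

open Real

noncomputable section

/-- The antilinear operator `K`: `(Ku)(x,y) = ((x+iy)/|x+iy|) · conj(u(x,y))`,
i.e. `Ku = e^{iθ} ū` in polar coordinates. -/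
def Kop (u : ℝ × ℝ → ℂ) : ℝ × ℝ → ℂ :=
  fun p => ((p.1 + p.2 * Complex.I) / ((‖(p.1 + p.2 * Complex.I : ℂ)‖ : ℝ) : ℂ))
    * (starRingEnd ℂ) (u p)

/-- The antilinear symmetry `Σ₂^c = ΓΣ₂`: `(Σ₂^c u)(x,y) = conj(u(x,−y))`. -/
def Sigma2c (u : ℝ × ℝ → ℂ) : ℝ × ℝ → ℂ :=
  fun p => (starRingEnd ℂ) (u (p.1, -p.2))

/-- The quantized rotation by `π/2`: `(R_{π/2}u)(x,y) = u(y,−x)`. -/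
def RotHalfPi (u : ℝ × ℝ → ℂ) : ℝ × ℝ → ℂ :=
  fun p => u (p.2, -p.1)

/-- The antilinear symmetry `Σ₄^c = e^{iπ/4}R_{π/2}Σ₂^c`:
`(Σ₄^c u)(x,y) = e^{iπ/4}·conj(u(y,x))`. -/
def Sigma4c (u : ℝ × ℝ → ℂ) : ℝ × ℝ → ℂ :=
  fun p => Complex.exp (π / 4 * Complex.I) * (starRingEnd ℂ) (u (p.2, p.1))

/-- Let `v` satisfy `Kv = v` and `Σ₂^c v = v` on `ℝ²∖{0}`, and set
`w = v + e^{iπ/4}R_{π/2}v`. Then: (i) `Kw = w` off the origin; (ii) `Σ₄^c w = w`,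
where `(Σ₄^c u)(x,y) = e^{iπ/4}·conj(u(y,x))`; and (iii) `w` vanishes on the
half-diagonal of angle `−3π/4`: `w(−t,−t) = 0` for every `t > 0`. -/
theorem diag_symmetric_eigenfunction (v : ℝ × ℝ → ℂ)
    (hKv : ∀ p : ℝ × ℝ, p ≠ 0 → Kop v p = v p)
    (hSv : ∀ p : ℝ × ℝ, p ≠ 0 → Sigma2c v p = v p)
    (w : ℝ × ℝ → ℂ)
    (hw : ∀ p : ℝ × ℝ, w p = v p + Complex.exp (π / 4 * Complex.I) * RotHalfPi v p) :
    (∀ p : ℝ × ℝ, p ≠ 0 → Kop w p = w p)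
    ∧ (∀ p : ℝ × ℝ, p ≠ 0 → Sigma4c w p = w p)
    ∧ (∀ t : ℝ, 0 < t → w (-t, -t) = 0) := by
  set c : ℂ := Complex.exp (π / 4 * Complex.I) with hc
  have hss : ((Real.sqrt 2 : ℝ) : ℂ) * ((Real.sqrt 2 : ℝ) : ℂ) = 2 := by
    norm_cast
    exact Real.mul_self_sqrt (by norm_num)
  have hcval : c = (Real.sqrt 2)/2 + (Real.sqrt 2)/2 * Complex.I := by
    rw [hc, show ((π:ℂ)/4*Complex.I) = (↑(π/4))*Complex.I by push_cast; ring]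
    rw [Complex.exp_mul_I, ← Complex.ofReal_cos, ← Complex.ofReal_sin,
      Real.cos_pi_div_four, Real.sin_pi_div_four]
    push_cast; ring
  have hcc : c * c = Complex.I := by
    rw [hc, ← Complex.exp_add,
      show ((π:ℂ)/4*Complex.I + (π:ℂ)/4*Complex.I) = (↑(π/2))*Complex.I by push_cast; ring,
      Complex.exp_mul_I, ← Complex.ofReal_cos, ← Complex.ofReal_sin,
      Real.cos_pi_div_two, Real.sin_pi_div_two]
    simp
  have hcconj : c * (starRingEnd ℂ) c = 1 := by
    rw [hc, ← Complex.exp_conj, ← Complex.exp_add]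
    rw [show ((π:ℂ)/4*Complex.I + (starRingEnd ℂ) ((π:ℂ)/4*Complex.I)) = 0 by
      simp
      rw [map_ofNat]
      ring]
    exact Complex.exp_zero
  have hIc : Complex.I * (starRingEnd ℂ) c = c := by
    calc Complex.I * (starRingEnd ℂ) c = c * (c * (starRingEnd ℂ) c) := by rw [← hcc]; ring
    _ = c := by rw [hcconj]; ring
  have hqnz : ∀ p : ℝ × ℝ, p ≠ 0 → ((p.2, -p.1) : ℝ × ℝ) ≠ 0 := by
    intro p hp h
    apply hp
    rw [Prod.ext_iff] at h ⊢
    simp at h ⊢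
    exact ⟨h.2, h.1⟩
  have hA : ∀ p : ℝ × ℝ, p ≠ 0 →
      ((p.2:ℂ) + (-p.1:ℝ)*Complex.I) / ((‖((p.2:ℂ) + (-p.1:ℝ)*Complex.I)‖ : ℝ) : ℂ)
        = -Complex.I * (((p.1:ℂ) + p.2*Complex.I) / ((‖((p.1:ℂ) + p.2*Complex.I)‖ : ℝ) : ℂ)) := by
    intro p hp
    have h1 : ((p.2:ℂ) + (-p.1:ℝ)*Complex.I) = -Complex.I * ((p.1:ℂ) + p.2*Complex.I) := by
      push_cast
      linear_combination ((p.2:ℝ):ℂ) * Complex.I_sq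
    rw [h1, norm_mul]
    simp only [norm_neg, Complex.norm_I, one_mul]
    ring
  refine ⟨?_, ?_, ?_⟩
  · intro p hp
    have h1 := hKv p hp
    have h2 := hKv _ (hqnz p hp)
    simp only [Kop] at h1 h2
    rw [hA p hp] at h2
    simp only [Kop, hw, RotHalfPi, map_add, map_mul]
    linear_combination h1 + c * h2
      + (-((((p.1:ℂ) + (p.2:ℂ) * Complex.I) / (‖((p.1:ℂ) + (p.2:ℂ) * Complex.I)‖ : ℝ))
          * (starRingEnd ℂ) (v (p.2, -p.1)) * Complex.I)) * hIc
      + ((((p.1:ℂ) + (p.2:ℂ) * Complex.I) / (‖((p.1:ℂ) + (p.2:ℂ) * Complex.I)‖ : ℝ))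
          * (starRingEnd ℂ) (v (p.2, -p.1)) * (starRingEnd ℂ) c) * Complex.I_sq
  · intro p hp
    have hp' : ((p.2, p.1) : ℝ × ℝ) ≠ 0 := by
      intro h; apply hp
      rw [Prod.ext_iff] at h ⊢; exact ⟨h.2, h.1⟩
    have h1 := hSv p hp
    have h2 := hSv _ (hqnz p hp)
    simp only [Sigma2c] at h1
    simp only [Sigma2c, neg_neg] at h2
    simp only [Sigma4c, hw, RotHalfPi, map_add, map_mul, ← hc]
    rw [h2, h1]
    linear_combination (v p) * hcconj
  · intro t ht
    have hp : ((-t, -t) : ℝ × ℝ) ≠ 0 := by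
      simp [Prod.ext_iff]
      exact ht.ne'
    have hp2 : ((-t, t) : ℝ × ℝ) ≠ 0 := by
      simp [Prod.ext_iff]
      intro h; exact absurd h ht.ne'
    have h1 := hKv _ hp
    have h2 := hSv _ hp2
    simp only [Kop] at h1
    simp only [Sigma2c, neg_neg] at h2
    have habs : (‖(((-t:ℝ):ℂ) + ((-t:ℝ):ℂ) * Complex.I)‖) = t * Real.sqrt 2 := by
      rw [Complex.norm_def, Complex.normSq_apply]
      simp
      rw [show t*t + t*t = t^2 * 2 by ring, Real.sqrt_mul (sq_nonneg t), Real.sqrt_sq ht.le]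
    have ht' : (t:ℂ) ≠ 0 := by exact_mod_cast ht.ne'
    have hs2' : ((Real.sqrt 2 : ℝ):ℂ) ≠ 0 := by
      intro h
      rw [h, mul_zero] at hss
      norm_num at hss
    have hphase : (((-t:ℝ):ℂ) + ((-t:ℝ):ℂ) * Complex.I)
        / ((‖(((-t:ℝ):ℂ) + ((-t:ℝ):ℂ) * Complex.I)‖ : ℝ) : ℂ) = -c := by
      rw [habs, hcval]
      push_cast
      rw [div_eq_iff (mul_ne_zero ht' hs2')]
      linear_combination ((t:ℂ)/2 + (t:ℂ)/2 * Complex.I) * hss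
    rw [hphase] at h1
    rw [hw]
    simp only [RotHalfPi, neg_neg]
    linear_combination (-1 : ℂ) * h1 + (-c) * h2

end
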